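/- Let {x_i} be a Markov chain with stationary distribution μ satisfying geometric mixing with constants κ > 0, ρ ∈ (0,1). Let h : 𝒳 → ℝ^d with ‖h(x)‖ ≤ C for all x and E_μ[h] = h̄. Then for the batch average h_B = (1/B)∑_{i=0}^{B−1} h(x_i) started from any initial state, E[‖h_B − h̄‖²] ≤ (1/B²)[4BC² + 8C²κρB/(1−ρ)] ≤ 8C²[1+(κ−1)ρ]/((1−ρ)B). -/

import Mathlib

open MeasureTheory ProbabilityTheory
open scoped RealInnerProductSpace

/-- `k`-step transition kernel of a time-homogeneous Markov chain. -/
noncomputable def kpow {𝒳 : Type*} [MeasurableSpace 𝒳] (P : Kernel 𝒳 𝒳) : ℕ → Kernel 𝒳 𝒳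
  | 0 => Kernel.id
  | n + 1 => (kpow P n).comp P

instance kpow_isMarkovKernel {𝒳 : Type*} [MeasurableSpace 𝒳] (P : Kernel 𝒳 𝒳)
    [IsMarkovKernel P] (k : ℕ) : IsMarkovKernel (kpow P k) := by
  induction k with
  | zero => rw [kpow]; infer_instance
  | succ n ih => rw [kpow]; exact Kernel.IsMarkovKernel.comp _ _

/-- Total-variation type bound for integrals of bounded real functions. -/
lemma tv_real_bound {𝒳 : Type*} [MeasurableSpace 𝒳] (ν₁ ν₂ : Measure 𝒳)
    [IsProbabilityMeasure ν₁] [IsProbabilityMeasure ν₂] {f : 𝒳 → ℝ} (hf : Measurable f)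
    {C ε : ℝ} (hC : 0 ≤ C) (hε : 0 ≤ ε) (hfb : ∀ s, |f s| ≤ C)
    (hset : ∀ A : Set 𝒳, MeasurableSet A → |(ν₁ A).toReal - (ν₂ A).toReal| ≤ ε) :
    ∫ s, f s ∂ν₁ - ∫ s, f s ∂ν₂ ≤ 2 * C * ε := by
  set F : 𝒳 → ℝ := fun s => f s + C with hF
  have hFm : Measurable F := hf.add measurable_const
  have hFnn : ∀ s, 0 ≤ F s := fun s => by have := abs_le.mp (hfb s); simp [hF]; linarith
  have hFb : ∀ s, F s ≤ 2 * C := fun s => by have := abs_le.mp (hfb s); simp [hF]; linarith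
  have hint : ∀ (ν : Measure 𝒳) [IsProbabilityMeasure ν], Integrable F ν := by
    intro ν _
    refine (integrable_const (2 * C)).mono' hFm.aestronglyMeasurable (ae_of_all _ fun s => ?_)
    rw [Real.norm_eq_abs, abs_of_nonneg (hFnn s)]; exact hFb s
  have hfint : ∀ (ν : Measure 𝒳) [IsProbabilityMeasure ν], Integrable f ν := by
    intro ν _
    refine (integrable_const C).mono' hf.aestronglyMeasurable (ae_of_all _ fun s => hfb s)
  have hEq : ∀ (ν : Measure 𝒳) [IsProbabilityMeasure ν],
      ∫ s, f s ∂ν = ∫ s, F s ∂ν - C := by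
    intro ν _
    have : ∫ s, F s ∂ν = ∫ s, f s ∂ν + C := by
      rw [hF, integral_add (hfint ν) (integrable_const C), integral_const]
      simp
    linarith
  rw [hEq ν₁, hEq ν₂]
  have hmeasr : ∀ (ν : Measure 𝒳), Measurable (fun t : ℝ => (ν {a | t ≤ F a}).toReal) := by
    intro ν
    refine Measurable.ennreal_toReal ?_
    exact Antitone.measurable (fun s t hst => measure_mono (fun a ha => le_trans hst ha))
  have hir : ∀ (ν : Measure 𝒳) [IsProbabilityMeasure ν],
      IntegrableOn (fun t : ℝ => (ν {a | t ≤ F a}).toReal) (Set.Ioc 0 (2 * C)) := by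
    intro ν _
    refine Integrable.mono' (g := fun _ => (1 : ℝ))
      ((integrableOn_const_iff).mpr (Or.inr measure_Ioc_lt_top)) ((hmeasr ν).aestronglyMeasurable)
      (ae_of_all _ fun t => ?_)
    rw [Real.norm_eq_abs, abs_of_nonneg ENNReal.toReal_nonneg]
    exact ENNReal.toReal_le_of_le_ofReal one_pos.le (by simpa using prob_le_one)
  have hlay : ∀ (ν : Measure 𝒳) [IsProbabilityMeasure ν],
      ∫ s, F s ∂ν = ∫ t in Set.Ioc 0 (2 * C), (ν {a | t ≤ F a}).toReal := by
    intro ν _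
    exact (hint ν).integral_eq_integral_Ioc_meas_le (ae_of_all _ hFnn) (ae_of_all _ hFb)
  have hsub : (∫ t in Set.Ioc 0 (2 * C), (ν₁ {a | t ≤ F a}).toReal) -
      (∫ t in Set.Ioc 0 (2 * C), (ν₂ {a | t ≤ F a}).toReal) =
      ∫ t in Set.Ioc 0 (2 * C), ((ν₁ {a | t ≤ F a}).toReal - (ν₂ {a | t ≤ F a}).toReal) :=
    (integral_sub (hir ν₁) (hir ν₂)).symm
  have hFset : ∀ t : ℝ, MeasurableSet {a | t ≤ F a} := fun t =>
    measurableSet_le measurable_const hFm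
  have hle : ∫ t in Set.Ioc 0 (2 * C),
      ((ν₁ {a | t ≤ F a}).toReal - (ν₂ {a | t ≤ F a}).toReal) ≤ 2 * C * ε := by
    calc ∫ t in Set.Ioc 0 (2 * C), ((ν₁ {a | t ≤ F a}).toReal - (ν₂ {a | t ≤ F a}).toReal)
        ≤ ∫ _ in Set.Ioc 0 (2 * C), ε := by
          refine integral_mono ((hir ν₁).sub (hir ν₂)) ((integrableOn_const_iff).mpr
            (Or.inr measure_Ioc_lt_top)) (fun t => ?_)
          exact le_trans (le_abs_self _) (hset _ (hFset t))
      _ ≤ 2 * C * ε := by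
          rw [setIntegral_const, measureReal_def, Real.volume_Ioc, smul_eq_mul]
          rw [ENNReal.toReal_ofReal (by linarith)]
          nlinarith
  rw [hlay ν₁, hlay ν₂]
  linarith

/-- Vector-valued total-variation bound. -/
lemma tv_vec_bound {𝒳 : Type*} [MeasurableSpace 𝒳] {d : ℕ} (ν₁ ν₂ : Measure 𝒳)
    [IsProbabilityMeasure ν₁] [IsProbabilityMeasure ν₂]
    {h : 𝒳 → EuclideanSpace ℝ (Fin d)} (hmeas : Measurable h)
    {C ε : ℝ} (hC : 0 ≤ C) (hε : 0 ≤ ε) (hbd : ∀ s, ‖h s‖ ≤ C)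
    (hset : ∀ A : Set 𝒳, MeasurableSet A → |(ν₁ A).toReal - (ν₂ A).toReal| ≤ ε) :
    ‖(∫ s, h s ∂ν₁) - ∫ s, h s ∂ν₂‖ ≤ 2 * C * ε := by
  set v : EuclideanSpace ℝ (Fin d) := (∫ s, h s ∂ν₁) - ∫ s, h s ∂ν₂ with hv
  rcases eq_or_ne v 0 with h0 | h0
  · rw [h0, norm_zero]; positivity
  have hvpos : 0 < ‖v‖ := norm_pos_iff.mpr h0
  have hhint : ∀ (ν : Measure 𝒳) [IsProbabilityMeasure ν], Integrable h ν := by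
    intro ν _
    exact (integrable_const C).mono' hmeas.aestronglyMeasurable (ae_of_all _ hbd)
  have hfm : Measurable (fun s => ⟪v, h s⟫) := measurable_const.inner hmeas
  have hfb : ∀ s, |⟪v, h s⟫| ≤ ‖v‖ * C := fun s =>
    (abs_real_inner_le_norm v (h s)).trans
      (mul_le_mul_of_nonneg_left (hbd s) (norm_nonneg v))
  have key : (∫ s, ⟪v, h s⟫ ∂ν₁) - ∫ s, ⟪v, h s⟫ ∂ν₂ ≤ 2 * (‖v‖ * C) * ε :=
    tv_real_bound ν₁ ν₂ hfm (by positivity) hε hfb hset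
  rw [integral_inner (hhint ν₁) v, integral_inner (hhint ν₂) v,
    ← inner_sub_right, ← hv, real_inner_self_eq_norm_sq] at key
  nlinarith [sq_nonneg (‖v‖ - 2 * C * ε)]

lemma geom_tail_sum {ρ : ℝ} (h0 : 0 ≤ ρ) (h1 : ρ < 1) (n : ℕ) :
    ∑ i ∈ Finset.range n, ρ ^ (n - i) ≤ ρ / (1 - ρ) := by
  have h1ρ : 0 < 1 - ρ := by linarith
  have hrefl : ∑ i ∈ Finset.range n, ρ ^ (n - i) = ∑ i ∈ Finset.range n, ρ ^ (i + 1) := by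
    rw [← Finset.sum_range_reflect (fun i => ρ ^ (n - i)) n]
    refine Finset.sum_congr rfl fun i hi => ?_
    have := Finset.mem_range.mp hi
    congr 1
    omega
  rw [hrefl]
  have hmul : ∑ i ∈ Finset.range n, ρ ^ (i + 1) = ρ * ∑ i ∈ Finset.range n, ρ ^ i := by
    rw [Finset.mul_sum]
    exact Finset.sum_congr rfl fun i _ => by ring
  rw [hmul]
  have hgeom : ∑ i ∈ Finset.range n, ρ ^ i ≤ 1 / (1 - ρ) := by
    rw [geom_sum_eq (ne_of_lt h1) n]
    have hpow : 0 ≤ ρ ^ n := pow_nonneg h0 n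
    have heq : (ρ ^ n - 1) / (ρ - 1) = (1 - ρ ^ n) / (1 - ρ) := by
      rw [div_eq_div_iff (by linarith) (by linarith)]
      ring
    rw [heq, div_le_div_iff₀ h1ρ h1ρ]
    nlinarith
  calc ρ * ∑ i ∈ Finset.range n, ρ ^ i ≤ ρ * (1 / (1 - ρ)) :=
        mul_le_mul_of_nonneg_left hgeom h0
    _ = ρ / (1 - ρ) := by ring

lemma geom_double_sum {ρ : ℝ} (h0 : 0 ≤ ρ) (h1 : ρ < 1) (B : ℕ) :
    ∑ i ∈ Finset.range B, ∑ j ∈ Finset.range B,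
      (if i = j then 0 else ρ ^ Nat.dist i j) ≤ B * (2 * ρ / (1 - ρ)) := by
  have h1ρ : 0 < 1 - ρ := by linarith
  induction B with
  | zero => simp
  | succ n ih =>
    have hsplit : ∑ i ∈ Finset.range (n + 1), ∑ j ∈ Finset.range (n + 1),
        (if i = j then 0 else ρ ^ Nat.dist i j)
        = (∑ i ∈ Finset.range n, ∑ j ∈ Finset.range n,
            (if i = j then 0 else ρ ^ Nat.dist i j))
          + (∑ i ∈ Finset.range n, (if i = n then 0 else ρ ^ Nat.dist i n))
          + (∑ j ∈ Finset.range n, (if n = j then 0 else ρ ^ Nat.dist n j))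
          + (if n = n then 0 else ρ ^ Nat.dist n n) := by
      rw [Finset.sum_range_succ]
      simp_rw [Finset.sum_range_succ]
      rw [Finset.sum_add_distrib]
      ring
    rw [hsplit]
    have hcol : ∑ i ∈ Finset.range n, (if i = n then 0 else ρ ^ Nat.dist i n)
        ≤ ρ / (1 - ρ) := by
      have : ∀ i ∈ Finset.range n, (if i = n then 0 else ρ ^ Nat.dist i n) = ρ ^ (n - i) := by
        intro i hi
        have hin : i < n := Finset.mem_range.mp hi
        rw [if_neg (by omega), Nat.dist_eq_sub_of_le hin.le]
      rw [Finset.sum_congr rfl this]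
      exact geom_tail_sum h0 h1 n
    have hrow : ∑ j ∈ Finset.range n, (if n = j then 0 else ρ ^ Nat.dist n j)
        ≤ ρ / (1 - ρ) := by
      have : ∀ j ∈ Finset.range n, (if n = j then 0 else ρ ^ Nat.dist n j) = ρ ^ (n - j) := by
        intro j hj
        have hjn : j < n := Finset.mem_range.mp hj
        rw [if_neg (by omega), Nat.dist_eq_sub_of_le_right hjn.le]
      rw [Finset.sum_congr rfl this]
      exact geom_tail_sum h0 h1 n
    simp only [if_pos rfl]
    have hexp : ((n : ℝ) + 1) * (2 * ρ / (1 - ρ)) = (n : ℝ) * (2 * ρ / (1 - ρ)) + 2 * (ρ / (1 - ρ)) := by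
      ring
    push_cast
    linarith

/-- Second-moment bound for a Markovian batch average of a bounded vector-valued
function, started from an arbitrary initial state distribution. -/
theorem markov_batch_average_bound {𝒳 : Type*} [MeasurableSpace 𝒳] {d : ℕ}
    (P : Kernel 𝒳 𝒳) [IsMarkovKernel P] (μ : Measure 𝒳) [IsProbabilityMeasure μ]
    (hstat : μ.bind (fun s => P s) = μ)
    (κ ρ : ℝ) (hκ : 0 < κ) (hρ : ρ ∈ Set.Ioo (0 : ℝ) 1)
    (hmix : ∀ (x : 𝒳) (k : ℕ) (A : Set 𝒳), MeasurableSet A →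
      |((kpow P k x) A).toReal - (μ A).toReal| ≤ κ * ρ ^ k)
    (h : 𝒳 → EuclideanSpace ℝ (Fin d)) (C : ℝ) (hmeas : Measurable h)
    (hbd : ∀ x, ‖h x‖ ≤ C)
    {Ω : Type*} [MeasurableSpace Ω] (Pr : Measure Ω) [IsProbabilityMeasure Pr]
    (x : ℕ → Ω → 𝒳) (hx : ∀ i, Measurable (x i))
    (hMarkov : ∀ (i k : ℕ) (A B : Set 𝒳), MeasurableSet A → MeasurableSet B →
      Pr {ω | x i ω ∈ A ∧ x (i + k) ω ∈ B} =
        ∫⁻ s in A, (kpow P k s) B ∂(Pr.map (x i)))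
    (B : ℕ) (hB : 0 < B) :
    (∫ ω, ‖(B : ℝ)⁻¹ • ∑ i ∈ Finset.range B, h (x i ω) - ∫ s, h s ∂μ‖ ^ 2 ∂Pr ≤
        (1 / (B : ℝ) ^ 2) * (4 * B * C ^ 2 + 8 * C ^ 2 * κ * ρ * B / (1 - ρ))) ∧
      ∫ ω, ‖(B : ℝ)⁻¹ • ∑ i ∈ Finset.range B, h (x i ω) - ∫ s, h s ∂μ‖ ^ 2 ∂Pr ≤
        8 * C ^ 2 * (1 + (κ - 1) * ρ) / ((1 - ρ) * B) := by
  obtain ⟨hρ0, hρ1⟩ := hρ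
  have h1ρ : 0 < 1 - ρ := by linarith
  have h𝒳 : Nonempty 𝒳 := by
    by_contra hc
    rw [not_nonempty_iff] at hc
    have h1 := measure_univ (μ := μ)
    rw [Measure.eq_zero_of_isEmpty μ] at h1
    simp at h1
  have hC0 : 0 ≤ C := le_trans (norm_nonneg _) (hbd h𝒳.some)
  set hbar : EuclideanSpace ℝ (Fin d) := ∫ s, h s ∂μ with hbar_def
  set g : 𝒳 → EuclideanSpace ℝ (Fin d) := fun s => h s - hbar with g_def
  have hgmeas : Measurable g := hmeas.sub measurable_const
  have hhint : ∀ (ν : Measure 𝒳) [IsProbabilityMeasure ν], Integrable h ν := by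
    intro ν _
    exact (integrable_const C).mono' hmeas.aestronglyMeasurable (ae_of_all _ hbd)
  have hbarNorm : ‖hbar‖ ≤ C := by
    calc ‖hbar‖ ≤ ∫ s, ‖h s‖ ∂μ := norm_integral_le_integral_norm _
      _ ≤ ∫ _, C ∂μ := integral_mono (hhint μ).norm (integrable_const C) hbd
      _ = C := by simp
  have hgbd : ∀ s, ‖g s‖ ≤ 2 * C := fun s => by
    calc ‖g s‖ ≤ ‖h s‖ + ‖hbar‖ := norm_sub_le _ _
      _ ≤ C + C := add_le_add (hbd s) hbarNorm
      _ = 2 * C := by ring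
  have hgint : ∀ (ν : Measure 𝒳) [IsProbabilityMeasure ν], Integrable g ν := by
    intro ν _
    exact (integrable_const (2 * C)).mono' hgmeas.aestronglyMeasurable (ae_of_all _ hgbd)
  -- conditional expectation of g after k steps is small
  have hmixInt : ∀ (s : 𝒳) (k : ℕ), ‖∫ t, g t ∂(kpow P k s)‖ ≤ 2 * C * (κ * ρ ^ k) := by
    intro s k
    have hsplit : ∫ t, g t ∂(kpow P k s) = (∫ t, h t ∂(kpow P k s)) - hbar := by
      rw [g_def]
      rw [integral_sub (hhint (kpow P k s)) (integrable_const hbar), integral_const]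
      simp
    rw [hsplit]
    exact tv_vec_bound (kpow P k s) μ hmeas hC0 (by positivity) hbd
      (fun A hA => hmix s k A hA)
  -- covariance bound along the chain
  have pairLE : ∀ (i k : ℕ), ∫ ω, ⟪g (x i ω), g (x (i + k) ω)⟫ ∂Pr ≤
      4 * C ^ 2 * (κ * ρ ^ k) := by
    intro i k
    set ν : Measure 𝒳 := Pr.map (x i) with hν
    haveI : IsProbabilityMeasure ν := Measure.isProbabilityMeasure_map (hx i).aemeasurable
    have hxy : Measurable (fun ω => (x i ω, x (i + k) ω)) := (hx i).prodMk (hx (i + k))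
    haveI : IsProbabilityMeasure (Pr.map (fun ω => (x i ω, x (i + k) ω))) :=
      Measure.isProbabilityMeasure_map hxy.aemeasurable
    have hJ : Pr.map (fun ω => (x i ω, x (i + k) ω)) = ν.compProd (kpow P k) := by
      refine ext_of_generate_finite _ generateFrom_prod.symm isPiSystem_prod ?_ ?_
      · rintro _ ⟨A, hA, Bs, hBs, rfl⟩
        simp only [Set.mem_setOf_eq] at hA hBs
        rw [Measure.map_apply hxy (hA.prod hBs)]
        have hpre : (fun ω => (x i ω, x (i + k) ω)) ⁻¹' (A ×ˢ Bs) =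
            {ω | x i ω ∈ A ∧ x (i + k) ω ∈ Bs} := by
          ext ω; simp [Set.mem_prod]
        rw [hpre, hMarkov i k A Bs hA hBs, Measure.compProd_apply_prod hA hBs]
      · simp [measure_univ]
    have hFmeas : Measurable (fun p : 𝒳 × 𝒳 => ⟪g p.1, g p.2⟫) :=
      (hgmeas.comp measurable_fst).inner (hgmeas.comp measurable_snd)
    have hFint : Integrable (fun p : 𝒳 × 𝒳 => ⟪g p.1, g p.2⟫) (ν.compProd (kpow P k)) := by
      refine (integrable_const ((2 * C) * (2 * C))).mono' hFmeas.aestronglyMeasurable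
        (ae_of_all _ fun p => ?_)
      rw [Real.norm_eq_abs]
      exact (abs_real_inner_le_norm _ _).trans
        (mul_le_mul (hgbd _) (hgbd _) (norm_nonneg _) (by linarith))
    have hEq : ∫ ω, ⟪g (x i ω), g (x (i + k) ω)⟫ ∂Pr =
        ∫ s, ∫ t, ⟪g s, g t⟫ ∂(kpow P k s) ∂ν := by
      rw [← Measure.integral_compProd hFint, ← hJ,
        integral_map hxy.aemeasurable hFmeas.aestronglyMeasurable]
    rw [hEq]
    have hpt : ∀ s, ∫ t, ⟪g s, g t⟫ ∂(kpow P k s) ≤ 4 * C ^ 2 * (κ * ρ ^ k) := by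
      intro s
      rw [integral_inner (hgint (kpow P k s)) (g s)]
      calc ⟪g s, ∫ t, g t ∂(kpow P k s)⟫ ≤ ‖g s‖ * ‖∫ t, g t ∂(kpow P k s)‖ :=
            real_inner_le_norm _ _
        _ ≤ (2 * C) * (2 * C * (κ * ρ ^ k)) :=
            mul_le_mul (hgbd s) (hmixInt s k) (norm_nonneg _) (by linarith)
        _ = 4 * C ^ 2 * (κ * ρ ^ k) := by ring
    by_cases hI : Integrable (fun s => ∫ t, ⟪g s, g t⟫ ∂(kpow P k s)) ν
    · calc ∫ s, ∫ t, ⟪g s, g t⟫ ∂(kpow P k s) ∂ν ≤ ∫ _, 4 * C ^ 2 * (κ * ρ ^ k) ∂ν :=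
            integral_mono hI (integrable_const _) hpt
        _ = 4 * C ^ 2 * (κ * ρ ^ k) := by simp
    · rw [integral_undef hI]; positivity
  -- integrability of the covariance terms
  have hib : ∀ i j, Integrable (fun ω => ⟪g (x i ω), g (x j ω)⟫) Pr := by
    intro i j
    refine (integrable_const ((2 * C) * (2 * C))).mono'
      (((hgmeas.comp (hx i)).inner (hgmeas.comp (hx j))).aestronglyMeasurable)
      (ae_of_all _ fun ω => ?_)
    rw [Real.norm_eq_abs]
    exact (abs_real_inner_le_norm _ _).trans
      (mul_le_mul (hgbd _) (hgbd _) (norm_nonneg _) (by linarith))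
  -- unified per-pair bound
  have pair : ∀ i j, ∫ ω, ⟪g (x i ω), g (x j ω)⟫ ∂Pr ≤
      4 * C ^ 2 * (if i = j then 1 else κ * ρ ^ Nat.dist i j) := by
    intro i j
    rcases lt_trichotomy i j with hij | rfl | hij
    · rw [if_neg (Nat.ne_of_lt hij)]
      rw [Nat.dist_eq_sub_of_le hij.le]
      have hk : i + (j - i) = j := by omega
      have := pairLE i (j - i)
      rw [hk] at this
      exact this
    · rw [if_pos rfl, mul_one]
      have hpt : ∀ ω, ⟪g (x i ω), g (x i ω)⟫ ≤ 4 * C ^ 2 := fun ω => by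
        rw [real_inner_self_eq_norm_sq]
        calc ‖g (x i ω)‖ ^ 2 ≤ (2 * C) ^ 2 :=
              pow_le_pow_left₀ (norm_nonneg _) (hgbd _) 2
          _ = 4 * C ^ 2 := by ring
      calc ∫ ω, ⟪g (x i ω), g (x i ω)⟫ ∂Pr ≤ ∫ _, 4 * C ^ 2 ∂Pr :=
            integral_mono (hib i i) (integrable_const _) hpt
        _ = 4 * C ^ 2 := by simp
    · rw [if_neg (Nat.ne_of_gt hij)]
      have hswap : ∀ ω, ⟪g (x i ω), g (x j ω)⟫ = ⟪g (x j ω), g (x i ω)⟫ := fun ω =>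
        real_inner_comm _ _
      simp_rw [hswap]
      rw [Nat.dist_eq_sub_of_le_right hij.le]
      have hk : j + (i - j) = i := by omega
      have := pairLE j (i - j)
      rw [hk] at this
      exact this
  -- rewrite the batch average
  have hrw : ∀ ω, (B : ℝ)⁻¹ • ∑ i ∈ Finset.range B, h (x i ω) - hbar =
      (B : ℝ)⁻¹ • ∑ i ∈ Finset.range B, g (x i ω) := by
    intro ω
    have hsum : ∑ i ∈ Finset.range B, g (x i ω) =
        (∑ i ∈ Finset.range B, h (x i ω)) - (B : ℕ) • hbar := by
      rw [g_def, Finset.sum_sub_distrib, Finset.sum_const, Finset.card_range]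
    rw [hsum, smul_sub, ← Nat.cast_smul_eq_nsmul ℝ B hbar, smul_smul,
      inv_mul_cancel₀ (Nat.cast_ne_zero.mpr hB.ne'), one_smul]
  have hBpos : (0 : ℝ) < (B : ℝ) := Nat.cast_pos.mpr hB
  -- expand the squared norm
  have hnorm : ∀ ω, ‖(B : ℝ)⁻¹ • ∑ i ∈ Finset.range B, g (x i ω)‖ ^ 2 =
      ((B : ℝ) ^ 2)⁻¹ * ∑ i ∈ Finset.range B, ∑ j ∈ Finset.range B,
        ⟪g (x i ω), g (x j ω)⟫ := by
    intro ω
    rw [norm_smul, mul_pow, Real.norm_eq_abs, abs_of_nonneg (by positivity), inv_pow]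
    congr 1
    rw [← real_inner_self_eq_norm_sq, sum_inner]
    exact Finset.sum_congr rfl fun i _ => inner_sum _ _ _
  have key : ∫ ω, ‖(B : ℝ)⁻¹ • ∑ i ∈ Finset.range B, h (x i ω) - hbar‖ ^ 2 ∂Pr =
      ((B : ℝ) ^ 2)⁻¹ * ∑ i ∈ Finset.range B, ∑ j ∈ Finset.range B,
        ∫ ω, ⟪g (x i ω), g (x j ω)⟫ ∂Pr := by
    simp_rw [hrw, hnorm]
    rw [integral_const_mul]
    congr 1
    rw [integral_finset_sum _ (fun i _ => integrable_finset_sum _ (fun j _ => hib i j))]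
    exact Finset.sum_congr rfl fun i _ => integral_finset_sum _ (fun j _ => hib i j)
  -- bound the double sum
  have sum_bound : ∑ i ∈ Finset.range B, ∑ j ∈ Finset.range B,
      ∫ ω, ⟪g (x i ω), g (x j ω)⟫ ∂Pr ≤
      4 * C ^ 2 * B + 4 * C ^ 2 * κ * (B * (2 * ρ / (1 - ρ))) := by
    calc ∑ i ∈ Finset.range B, ∑ j ∈ Finset.range B, ∫ ω, ⟪g (x i ω), g (x j ω)⟫ ∂Pr
        ≤ ∑ i ∈ Finset.range B, ∑ j ∈ Finset.range B,
            (4 * C ^ 2 * (if i = j then 1 else κ * ρ ^ Nat.dist i j)) :=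
          Finset.sum_le_sum fun i _ => Finset.sum_le_sum fun j _ => pair i j
      _ = ∑ i ∈ Finset.range B, ∑ j ∈ Finset.range B,
            (4 * C ^ 2 * (if i = j then 1 else 0)
              + 4 * C ^ 2 * κ * (if i = j then 0 else ρ ^ Nat.dist i j)) := by
          refine Finset.sum_congr rfl fun i _ => Finset.sum_congr rfl fun j _ => ?_
          by_cases hij : i = j <;> simp [hij] <;> ring
      _ = 4 * C ^ 2 * B + 4 * C ^ 2 * κ * (∑ i ∈ Finset.range B, ∑ j ∈ Finset.range B,
            (if i = j then 0 else ρ ^ Nat.dist i j)) := by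
          simp_rw [Finset.sum_add_distrib]
          congr 1
          · calc ∑ i ∈ Finset.range B, ∑ j ∈ Finset.range B,
                  (4 * C ^ 2 * (if i = j then (1:ℝ) else 0))
                = ∑ i ∈ Finset.range B, 4 * C ^ 2 := by
                  refine Finset.sum_congr rfl fun i hi => ?_
                  rw [← Finset.mul_sum, Finset.sum_ite_eq, if_pos hi, mul_one]
              _ = 4 * C ^ 2 * B := by
                  rw [Finset.sum_const, Finset.card_range, nsmul_eq_mul]; ring
          · rw [Finset.mul_sum]
            refine Finset.sum_congr rfl fun i _ => ?_
            rw [Finset.mul_sum]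
      _ ≤ 4 * C ^ 2 * B + 4 * C ^ 2 * κ * (B * (2 * ρ / (1 - ρ))) := by
          have hS := geom_double_sum hρ0.le hρ1 B
          have hm := mul_le_mul_of_nonneg_left hS
            (by positivity : (0:ℝ) ≤ 4 * C ^ 2 * κ)
          linarith
  have hE1 : ∫ ω, ‖(B : ℝ)⁻¹ • ∑ i ∈ Finset.range B, h (x i ω) - hbar‖ ^ 2 ∂Pr ≤
      (1 / (B : ℝ) ^ 2) * (4 * B * C ^ 2 + 8 * C ^ 2 * κ * ρ * B / (1 - ρ)) := by
    rw [key, one_div]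
    have heq : (4:ℝ) * C ^ 2 * B + 4 * C ^ 2 * κ * (B * (2 * ρ / (1 - ρ))) =
        4 * B * C ^ 2 + 8 * C ^ 2 * κ * ρ * B / (1 - ρ) := by
      field_simp
      ring
    calc ((B : ℝ) ^ 2)⁻¹ * ∑ i ∈ Finset.range B, ∑ j ∈ Finset.range B,
          ∫ ω, ⟪g (x i ω), g (x j ω)⟫ ∂Pr
        ≤ ((B : ℝ) ^ 2)⁻¹ * (4 * C ^ 2 * B + 4 * C ^ 2 * κ * (B * (2 * ρ / (1 - ρ)))) :=
          mul_le_mul_of_nonneg_left sum_bound (by positivity)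
      _ = ((B : ℝ) ^ 2)⁻¹ * (4 * B * C ^ 2 + 8 * C ^ 2 * κ * ρ * B / (1 - ρ)) := by rw [heq]
  refine ⟨hE1, hE1.trans ?_⟩
  have hdiff : 8 * C ^ 2 * (1 + (κ - 1) * ρ) / ((1 - ρ) * B) -
      (1 / (B : ℝ) ^ 2) * (4 * B * C ^ 2 + 8 * C ^ 2 * κ * ρ * B / (1 - ρ)) = 4 * C ^ 2 / B := by
    field_simp
    ring
  have hnn : (0:ℝ) ≤ 4 * C ^ 2 / (B : ℝ) := by positivity
  linarith
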